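/- Let d ≥ 1, let U ⊆ ℝ^d be a nonempty open set (with the Euclidean distance), let φ : U → AdS^{d+1} be a spacelike immersion, and let g : ℝ^{d+2} → ℝ^{d+2} be a linear map with ⟨g(u), g(v)⟩ = ⟨u, v⟩ for all u, v ∈ ℝ^{d+2} and det(g) = 1. If g(φ(p)) = φ(p) for all p ∈ U, then g is the identity map. -/

import Mathlib

noncomputable section

/-- The coefficient of the signature-(d,2) quadratic form: +1 on the first `d`
coordinates, −1 on the last two. -/
def eps (d : ℕ) (i : Fin (d + 2)) : ℝ := if (i : ℕ) < d then 1 else -1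

/-- The bilinear form ⟨·,·⟩ of signature (d,2) on ℝ^{d+2}. -/
def bil (d : ℕ) (x y : EuclideanSpace ℝ (Fin (d + 2))) : ℝ := ∑ i, eps d i * x i * y i

/-- The quadratic form q of signature (d,2). -/
def quad (d : ℕ) (x : EuclideanSpace ℝ (Fin (d + 2))) : ℝ := bil d x x
/-- A spacelike immersion from a metric space into AdS^{d+1} = {q = −1}:
a locally Lipschitz map such that, locally, ⟨i(p), i(p')⟩ ≤ −1 − c·d(p,p')². -/
def IsSpacelikeImmersion {H : Type*} [MetricSpace H] (d : ℕ)
    (i : H → EuclideanSpace ℝ (Fin (d + 2))) : Prop :=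
  LocallyLipschitz i ∧
  ∀ p : H, ∃ U ∈ nhds p, ∃ c : ℝ, 0 < c ∧
    ∀ p' ∈ U, ∀ p'' ∈ U, bil d (i p') (i p'') ≤ -1 - c * dist p' p'' ^ 2



open Module Set
open scoped ENNReal NNReal

variable {d : ℕ}

lemma bil_add_left (x y z : EuclideanSpace ℝ (Fin (d + 2))) :
    bil d (x + y) z = bil d x z + bil d y z := by
  simp only [bil, PiLp.add_apply]
  rw [← Finset.sum_add_distrib]
  exact Finset.sum_congr rfl fun i _ => by ring

lemma bil_smul_left (a : ℝ) (x y : EuclideanSpace ℝ (Fin (d + 2))) :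
    bil d (a • x) y = a * bil d x y := by
  simp only [bil, PiLp.smul_apply, smul_eq_mul, Finset.mul_sum]
  exact Finset.sum_congr rfl fun i _ => by ring

lemma bil_comm (x y : EuclideanSpace ℝ (Fin (d + 2))) : bil d x y = bil d y x :=
  Finset.sum_congr rfl fun i _ => by ring

def Bf (d : ℕ) : LinearMap.BilinForm ℝ (EuclideanSpace ℝ (Fin (d + 2))) :=
  LinearMap.mk₂ ℝ (bil d) bil_add_left bil_smul_left
    (fun x y z => by rw [bil_comm, bil_add_left, bil_comm y x, bil_comm z x])
    (fun a x y => by rw [bil_comm, bil_smul_left, bil_comm y x, smul_eq_mul])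

@[simp] lemma Bf_apply (x y : EuclideanSpace ℝ (Fin (d + 2))) : Bf d x y = bil d x y := rfl

lemma Bf_isSymm : (Bf d).IsSymm := ⟨fun x y => by
  simpa using bil_comm x y⟩

lemma eps_ne_zero (i : Fin (d + 2)) : eps d i ≠ 0 := by
  unfold eps; split_ifs <;> norm_num

lemma bil_single (x : EuclideanSpace ℝ (Fin (d + 2))) (i : Fin (d + 2)) :
    bil d x (EuclideanSpace.single i 1) = eps d i * x i := by
  unfold bil
  rw [Finset.sum_eq_single i]
  · simp
  · intro j _ hj
    simp [EuclideanSpace.single_apply, hj]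
  · simp

lemma Bf_nondeg : (Bf d).Nondegenerate := by
  have hSL : LinearMap.SeparatingLeft (Bf d) := by
    intro x hx
    ext i
    have := hx (EuclideanSpace.single i 1)
    rw [Bf_apply, bil_single] at this
    have := (mul_eq_zero.mp this).resolve_left (eps_ne_zero i)
    simpa using this
  exact ⟨hSL, fun x hx => hSL x fun y => by rw [Bf_apply, bil_comm]; exact hx y⟩


set_option maxHeartbeats 1000000 in
lemma lemA (d : ℕ) (P : Submodule ℝ (EuclideanSpace ℝ (Fin (d + 2))))
    (x0 : EuclideanSpace ℝ (Fin (d + 2))) (hx0P : x0 ∈ P) (hx0 : bil d x0 x0 < 0) :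
    ∃ (m : ℕ) (L : EuclideanSpace ℝ (Fin (d + 2)) →ₗ[ℝ] EuclideanSpace ℝ (Fin m)),
      (∀ x ∈ P, bil d x x ≤ ‖L x‖ ^ 2) ∧ m + 1 ≤ finrank ℝ P ∧
      (∀ w, w ∈ P → w ≠ 0 → (∀ y ∈ P, bil d w y = 0) → m + 2 ≤ finrank ℝ P) := by
  classical
  set Br := (Bf d).restrict P with hBr
  have hsymm : Br.IsSymm := by
    refine ⟨fun x y => ?_⟩
    simpa [hBr, LinearMap.BilinForm.restrict_apply] using
      bil_comm (x : EuclideanSpace ℝ (Fin (d+2))) y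
  obtain ⟨v, hv⟩ := LinearMap.BilinForm.exists_orthogonal_basis (LinearMap.BilinForm.isSymm_iff.mp hsymm)
  set ε : Fin (finrank ℝ P) → ℝ := fun i => Br (v i) (v i) with hε
  have expand : ∀ y z : P, Br y z = ∑ i, (v.repr y i) * ((v.repr z i) * ε i) := by
    intro y z
    conv_lhs => rw [← v.sum_repr y]
    rw [LinearMap.BilinForm.sum_left]
    refine Finset.sum_congr rfl fun i _ => ?_
    rw [LinearMap.BilinForm.smul_left]
    congr 1
    conv_lhs => rw [← v.sum_repr z]
    rw [LinearMap.BilinForm.sum_right, Finset.sum_eq_single i]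
    · rw [LinearMap.BilinForm.smul_right]
    · intro j _ hj
      rw [LinearMap.BilinForm.smul_right, hv hj.symm, mul_zero]
    · intro h
      exact absurd (Finset.mem_univ i) h
  have expand' : ∀ (x : EuclideanSpace ℝ (Fin (d+2))) (hx : x ∈ P)
      (z : EuclideanSpace ℝ (Fin (d+2))) (hz : z ∈ P),
      bil d x z = ∑ i, (v.repr ⟨x, hx⟩ i) * ((v.repr ⟨z, hz⟩ i) * ε i) := by
    intro x hx z hz
    have h := expand ⟨x, hx⟩ ⟨z, hz⟩
    rw [hBr, LinearMap.BilinForm.restrict_apply] at h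
    simpa using h
  set Sp : Finset (Fin (finrank ℝ P)) := Finset.univ.filter (fun i => 0 < ε i) with hSp
  have hSpmem : ∀ i, i ∈ Sp ↔ 0 < ε i := by
    intro i
    rw [hSp, Finset.mem_filter]
    exact ⟨fun h => h.2, fun h => ⟨Finset.mem_univ i, h⟩⟩
  set m := Sp.card with hm
  have hcard : Fintype.card Sp = m := Fintype.card_coe Sp
  set e : Sp ≃ Fin m := Fintype.equivFinOfCardEq hcard with he
  set L0 : P →ₗ[ℝ] (Fin m → ℝ) :=
    LinearMap.pi (fun j => Real.sqrt (ε ((e.symm j) : Fin (finrank ℝ P))) •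
      (v.coord ((e.symm j) : Fin (finrank ℝ P)))) with hL0
  set L : EuclideanSpace ℝ (Fin (d+2)) →ₗ[ℝ] EuclideanSpace ℝ (Fin m) :=
    ((WithLp.linearEquiv 2 ℝ (Fin m → ℝ)).symm.toLinearMap.comp L0).comp
      ((P.orthogonalProjectionOnto).toLinearMap) with hL
  have hLval : ∀ (y : P) (j : Fin m),
      L (y : EuclideanSpace ℝ (Fin (d+2))) j
        = Real.sqrt (ε ((e.symm j) : Fin (finrank ℝ P))) * v.repr y ((e.symm j) : Fin (finrank ℝ P)) := by
    intro y j
    simp [hL, hL0, Submodule.orthogonalProjectionOnto_mem_subspace_eq_self, Basis.coord_apply,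
      WithLp.linearEquiv_symm_apply, LinearMap.pi_apply,
      LinearMap.smul_apply, smul_eq_mul]
  have hεpos : ∀ j : Fin m, 0 < ε ((e.symm j) : Fin (finrank ℝ P)) := by
    intro j
    exact (hSpmem _).mp (e.symm j).2
  have hnorm : ∀ (x : EuclideanSpace ℝ (Fin (d+2))) (hx : x ∈ P),
      ‖L x‖ ^ 2 = ∑ i ∈ Sp, (v.repr ⟨x, hx⟩ i) * ((v.repr ⟨x, hx⟩ i) * ε i) := by
    intro x hx
    rw [EuclideanSpace.norm_eq, Real.sq_sqrt (by positivity)]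
    rw [← Finset.sum_coe_sort Sp
      (fun i => (v.repr ⟨x, hx⟩ i) * ((v.repr ⟨x, hx⟩ i) * ε i))]
    rw [← Equiv.sum_comp e.symm
      (fun (i : Sp) => (v.repr ⟨x, hx⟩ (i : Fin (finrank ℝ P))) *
        ((v.repr ⟨x, hx⟩ (i : Fin (finrank ℝ P))) * ε (i : Fin (finrank ℝ P))))]
    refine Finset.sum_congr rfl fun j _ => ?_
    have hval := hLval ⟨x, hx⟩ j
    simp only [Submodule.coe_mk] at hval
    rw [hval, Real.norm_eq_abs, sq_abs, mul_pow, Real.sq_sqrt (hεpos j).le]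
    ring
  have hexneg : ∃ i, ε i < 0 := by
    by_contra h
    push_neg at h
    have h1 := expand' x0 hx0P x0 hx0P
    have h2 : (0:ℝ) ≤ ∑ i, (v.repr ⟨x0, hx0P⟩ i) * ((v.repr ⟨x0, hx0P⟩ i) * ε i) :=
      Finset.sum_nonneg fun i _ => by nlinarith [sq_nonneg (v.repr ⟨x0, hx0P⟩ i), h i]
    linarith
  have horthcoef : ∀ (w : EuclideanSpace ℝ (Fin (d+2))) (hw : w ∈ P),
      (∀ y ∈ P, bil d w y = 0) → ∀ i, v.repr ⟨w, hw⟩ i * ε i = 0 := by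
    intro w hw hworth i
    have h2 := expand' w hw ((v i) : EuclideanSpace ℝ (Fin (d+2))) (v i).2
    have h1 : bil d w ((v i) : EuclideanSpace ℝ (Fin (d+2))) = 0 :=
      hworth _ (v i).2
    have hvv : (⟨((v i) : EuclideanSpace ℝ (Fin (d+2))), (v i).2⟩ : P) = v i := rfl
    rw [h1, hvv, Finset.sum_eq_single i] at h2
    · rw [Basis.repr_self] at h2
      simp only [Finsupp.single_eq_same, one_mul] at h2
      exact h2.symm
    · intro j _ hj
      rw [Basis.repr_self, Finsupp.single_apply, if_neg (fun hh => hj (hh.symm))]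
      ring
    · intro h
      exact absurd (Finset.mem_univ i) h
  clear_value L L0 e m Sp ε Br
  refine ⟨m, L, ?_, ?_, ?_⟩
  · intro x hx
    have h1 := expand' x hx x hx
    have h2 : (∑ i, (v.repr ⟨x, hx⟩ i) * ((v.repr ⟨x, hx⟩ i) * ε i))
        = (∑ i ∈ Sp, (v.repr ⟨x, hx⟩ i) * ((v.repr ⟨x, hx⟩ i) * ε i))
          + ∑ i ∈ Finset.univ.filter (fun i => i ∉ Sp), (v.repr ⟨x, hx⟩ i) * ((v.repr ⟨x, hx⟩ i) * ε i) := by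
      have := Finset.sum_filter_add_sum_filter_not Finset.univ (fun i => i ∈ Sp)
        (fun i => (v.repr ⟨x, hx⟩ i) * ((v.repr ⟨x, hx⟩ i) * ε i))
      rw [Finset.filter_mem_eq_inter, Finset.univ_inter] at this
      exact this.symm
    have h3 : (∑ i ∈ Finset.univ.filter (fun i => i ∉ Sp),
        (v.repr ⟨x, hx⟩ i) * ((v.repr ⟨x, hx⟩ i) * ε i)) ≤ 0 := by
      refine Finset.sum_nonpos fun i hi => ?_
      rw [Finset.mem_filter] at hi
      have hεi : ε i ≤ 0 := not_lt.mp (fun hc => hi.2 ((hSpmem i).mpr hc))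
      nlinarith [sq_nonneg (v.repr ⟨x, hx⟩ i)]
    rw [h1, hnorm x hx]
    linarith
  · obtain ⟨i₁, hi₁⟩ := hexneg
    have hi₁S : i₁ ∉ Sp := fun h => absurd ((hSpmem i₁).mp h) (by linarith)
    have hss : Sp ⊂ Finset.univ :=
      Finset.ssubset_univ_iff.mpr (fun h => hi₁S (h ▸ Finset.mem_univ i₁))
    have hlt := Finset.card_lt_card hss
    rw [Finset.card_univ, Fintype.card_fin] at hlt
    omega
  · intro w hwP hw0 hworth
    obtain ⟨i₁, hi₁⟩ := hexneg
    have hi₁S : i₁ ∉ Sp := fun h => absurd ((hSpmem i₁).mp h) (by linarith)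
    have hcoef := horthcoef w hwP hworth
    have hyw0 : (⟨w, hwP⟩ : P) ≠ 0 := by
      intro h
      exact hw0 (by simpa using congrArg Subtype.val h)
    obtain ⟨i₂, hi₂⟩ : ∃ i, v.repr ⟨w, hwP⟩ i ≠ 0 := by
      by_contra h
      push_neg at h
      apply hyw0
      have h' : v.repr ⟨w, hwP⟩ = 0 := by
        ext i; exact h i
      have := congrArg v.repr.symm h'
      simpa using this
    have hε₂ : ε i₂ = 0 := (mul_eq_zero.mp (hcoef i₂)).resolve_left hi₂
    have hi₂S : i₂ ∉ Sp := fun h => by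
      have := (hSpmem i₂).mp h
      rw [hε₂] at this
      exact lt_irrefl _ this
    have hne12 : i₁ ≠ i₂ := by
      rintro rfl
      rw [hε₂] at hi₁
      exact lt_irrefl _ hi₁
    have hsub : Sp ⊆ Finset.univ \ ({i₁, i₂} : Finset _) := by
      intro i hi
      rw [Finset.mem_sdiff]
      refine ⟨Finset.mem_univ _, ?_⟩
      intro hmem
      rcases Finset.mem_insert.mp hmem with rfl | hmem'
      · exact hi₁S hi
      · rw [Finset.mem_singleton] at hmem'
        subst hmem'
        exact hi₂S hi
    have hc2 := Finset.card_le_card hsub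
    rw [Finset.card_sdiff, Finset.inter_univ, Finset.card_univ, Fintype.card_fin,
      Finset.card_pair hne12] at hc2
    have h2n : 2 ≤ finrank ℝ P := by
      have hcc := Finset.card_le_card (Finset.subset_univ ({i₁, i₂} : Finset _))
      rwa [Finset.card_pair hne12, Finset.card_univ, Fintype.card_fin] at hcc
    omega


lemma key (d : ℕ) (hd : 1 ≤ d) (U : Set (EuclideanSpace ℝ (Fin d))) (hUopen : IsOpen U)
    (hUne : U.Nonempty) (φ : U → EuclideanSpace ℝ (Fin (d + 2)))
    (hAdS : ∀ p, quad d (φ p) = -1) (hsp : IsSpacelikeImmersion d φ)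
    (m : ℕ) (hm : m < d) (L : EuclideanSpace ℝ (Fin (d + 2)) →ₗ[ℝ] EuclideanSpace ℝ (Fin m))
    (hL : ∀ p p' : U, quad d (φ p - φ p') ≤ ‖L (φ p) - L (φ p')‖ ^ 2) : False := by
  obtain ⟨q0, hq0⟩ := hUne
  set p0 : U := ⟨q0, hq0⟩ with hp0
  obtain ⟨V, hV, c, hc, hVb⟩ := hsp.2 p0
  rw [hp0, nhds_subtype_eq_comap] at hV
  obtain ⟨t, ht, hsub⟩ := Filter.mem_comap.mp hV
  obtain ⟨r1, hr1, hball1⟩ := Metric.mem_nhds_iff.mp ht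
  obtain ⟨r2, hr2, hball2⟩ := Metric.isOpen_iff.mp hUopen q0 hq0
  set r := min r1 r2 with hrdef
  have hrpos : 0 < r := lt_min hr1 hr2
  have hrU : Metric.ball q0 r ⊆ U := fun x hx =>
    hball2 (Metric.ball_subset_ball (min_le_right _ _) hx)
  have hrV : ∀ p : U, (p : EuclideanSpace ℝ (Fin d)) ∈ Metric.ball q0 r → p ∈ V := by
    intro p hp
    exact hsub (Set.mem_preimage.mpr (hball1 (Metric.ball_subset_ball (min_le_left _ _) hp)))
  have hsq : 0 < Real.sqrt (2 * c) := Real.sqrt_pos.mpr (by linarith)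
  have hBc : ∀ x y : EuclideanSpace ℝ (Fin (d + 2)), Bf d y x = Bf d x y := fun x y => by
    simpa using bil_comm y x
  have main : ∀ p p' : U, (p : EuclideanSpace ℝ (Fin d)) ∈ Metric.ball q0 r →
      (p' : EuclideanSpace ℝ (Fin d)) ∈ Metric.ball q0 r →
      Real.sqrt (2 * c) * dist (p : EuclideanSpace ℝ (Fin d)) (p' : EuclideanSpace ℝ (Fin d))
        ≤ ‖L (φ p) - L (φ p')‖ := by
    intro p p' hp hp'
    have h1 : bil d (φ p) (φ p') ≤ -1 - c * dist p p' ^ 2 := hVb p (hrV p hp) p' (hrV p' hp')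
    have h2 : quad d (φ p - φ p') = quad d (φ p) + quad d (φ p') - 2 * bil d (φ p) (φ p') := by
      simp only [quad, ← Bf_apply, map_sub, LinearMap.sub_apply]
      rw [hBc (φ p) (φ p')]
      ring
    have h3 : 2 * c * dist p p' ^ 2 ≤ quad d (φ p - φ p') := by
      rw [h2, hAdS p, hAdS p']
      nlinarith [h1]
    have h4 := hL p p'
    have h5 : (Real.sqrt (2 * c) * dist p p') ^ 2 ≤ ‖L (φ p) - L (φ p')‖ ^ 2 := by
      rw [mul_pow, Real.sq_sqrt (by linarith : (0:ℝ) ≤ 2 * c)]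
      calc 2 * c * dist p p' ^ 2 ≤ quad d (φ p - φ p') := h3
        _ ≤ _ := h4
    have h6 : Real.sqrt (2 * c) * dist p p' ≤ ‖L (φ p) - L (φ p')‖ := by
      have hnn : (0:ℝ) ≤ Real.sqrt (2 * c) * dist p p' := by positivity
      nlinarith [norm_nonneg (L (φ p) - L (φ p')), h5]
    rw [Subtype.dist_eq p p'] at h6
    exact h6
  set s : Set (EuclideanSpace ℝ (Fin d)) := Metric.ball q0 r with hs
  set F : s → EuclideanSpace ℝ (Fin m) := fun x => L (φ ⟨x.1, hrU x.2⟩) with hF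
  set K : ℝ≥0 := Real.toNNReal ((Real.sqrt (2 * c))⁻¹) with hK
  have hanti : AntilipschitzWith K F := by
    refine AntilipschitzWith.of_le_mul_dist fun x y => ?_
    have h6 := main ⟨x.1, hrU x.2⟩ ⟨y.1, hrU y.2⟩ x.2 y.2
    have hKcoe : (K : ℝ) = (Real.sqrt (2 * c))⁻¹ := Real.coe_toNNReal _ (by positivity)
    rw [Subtype.dist_eq x y, hKcoe, dist_eq_norm]
    rw [inv_mul_eq_div, le_div_iff₀ hsq, mul_comm]
    exact h6
  have e1 : dimH (Set.univ : Set ↥s) = (d : ℝ≥0∞) := by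
    have h := isometry_subtype_coe.dimH_image (Set.univ : Set ↥s)
    rw [Set.image_univ, Subtype.range_coe] at h
    rw [← h, Real.dimH_of_mem_nhds (Metric.ball_mem_nhds q0 hrpos), finrank_euclideanSpace_fin]
  have e2 : dimH (Set.univ : Set ↥s) ≤ dimH (F '' Set.univ) := hanti.le_dimH_image _
  have e3 : dimH (F '' Set.univ) ≤ (m : ℝ≥0∞) := by
    refine le_trans (dimH_mono (Set.subset_univ _)) ?_
    rw [Real.dimH_univ_eq_finrank, finrank_euclideanSpace_fin]
  have hdm : (d : ℝ≥0∞) ≤ (m : ℝ≥0∞) := e1 ▸ le_trans e2 e3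
  have : d ≤ m := by exact_mod_cast hdm
  omega

/-- an orientation-preserving linear isometry of the form ⟨·,·⟩
(i.e. preserving the bilinear form, with determinant 1) fixing pointwise the
image of a spacelike immersion of a nonempty open subset of ℝ^d is the
identity. -/
theorem isometry_fixing_spacelike_immersion_is_id (d : ℕ) (hd : 1 ≤ d)
    (U : Set (EuclideanSpace ℝ (Fin d))) (hUopen : IsOpen U) (hUne : U.Nonempty)
    (φ : U → EuclideanSpace ℝ (Fin (d + 2)))
    (hAdS : ∀ p, quad d (φ p) = -1)
    (hsp : IsSpacelikeImmersion d φ)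
    (g : EuclideanSpace ℝ (Fin (d + 2)) →ₗ[ℝ] EuclideanSpace ℝ (Fin (d + 2)))
    (hg : ∀ u v, bil d (g u) (g v) = bil d u v)
    (hdet : LinearMap.det g = 1)
    (hfix : ∀ p, g (φ p) = φ p) :
    g = LinearMap.id := by
  classical
  by_contra hne
  set N : Submodule ℝ (EuclideanSpace ℝ (Fin (d + 2))) := LinearMap.ker (g - LinearMap.id) with hN
  have hφN : ∀ p, φ p ∈ N := by
    intro p
    rw [hN, LinearMap.mem_ker, LinearMap.sub_apply, LinearMap.id_apply, hfix p, sub_self]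
  have hNfix : ∀ x ∈ N, g x = x := by
    intro x hx
    rw [hN, LinearMap.mem_ker, LinearMap.sub_apply, LinearMap.id_apply, sub_eq_zero] at hx
    exact hx
  obtain ⟨q0, hq0⟩ := hUne
  set p0 : U := ⟨q0, hq0⟩ with hp0
  have hx0 : bil d (φ p0) (φ p0) < 0 := by
    have h : bil d (φ p0) (φ p0) = -1 := hAdS p0
    rw [h]; norm_num
  have hrankN : d + 1 ≤ finrank ℝ N := by
    by_contra hlt
    push_neg at hlt
    obtain ⟨m, L, hbound, hm1, -⟩ := lemA d N (φ p0) (hφN p0) hx0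
    have hmd : m < d := by omega
    refine key d hd U hUopen ⟨q0, hq0⟩ φ hAdS hsp m hmd L ?_
    intro p p'
    have h := hbound (φ p - φ p') (Submodule.sub_mem N (hφN p) (hφN p'))
    rwa [map_sub] at h
  have hNne : N ≠ ⊤ := by
    intro h
    apply hne
    apply LinearMap.ext
    intro x
    have hx : x ∈ N := h ▸ Submodule.mem_top
    simpa using hNfix x hx
  have hNlt : finrank ℝ N < d + 2 := by
    have h := Submodule.finrank_lt hNne
    rwa [finrank_euclideanSpace_fin] at h
  have hNrank : finrank ℝ N = d + 1 := by omega
  set P := (Bf d).orthogonal N with hP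
  have hrefl : (Bf d).IsRefl := Bf_isSymm.isRefl
  have hPrank : finrank ℝ P = 1 := by
    rw [hP, LinearMap.BilinForm.finrank_orthogonal Bf_nondeg N,
      finrank_euclideanSpace_fin, hNrank]
    omega
  set bP := Module.finBasisOfFinrankEq ℝ P hPrank with hbP
  set w : EuclideanSpace ℝ (Fin (d + 2)) := ((bP 0 : P) : EuclideanSpace ℝ (Fin (d + 2))) with hw
  have hwP : w ∈ P := (bP 0).2
  have hw0 : w ≠ 0 := by
    intro h
    exact bP.ne_zero 0 (by rwa [hw, Submodule.coe_eq_zero] at h)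
  have hworthN : ∀ x ∈ N, bil d w x = 0 := by
    intro x hx
    have h1 := (LinearMap.BilinForm.mem_orthogonal_iff.mp hwP) x hx
    have h2 : bil d x w = 0 := h1
    rw [bil_comm]
    exact h2
  have hPspan : ∀ x, x ∈ P → ∃ a : ℝ, x = a • w := by
    intro x hx
    refine ⟨bP.repr ⟨x, hx⟩ 0, ?_⟩
    have h := bP.sum_repr ⟨x, hx⟩
    rw [Fin.sum_univ_one] at h
    have h2 := congrArg (Subtype.val : P → EuclideanSpace ℝ (Fin (d + 2))) h
    rw [Submodule.coe_smul] at h2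
    exact h2.symm
  have hqw : bil d w w ≠ 0 := by
    intro hqw0
    have hwker : w ∈ LinearMap.ker (Bf d w) := by
      rw [LinearMap.mem_ker]
      exact hqw0
    have hφker : ∀ p, φ p ∈ LinearMap.ker (Bf d w) := fun p => by
      rw [LinearMap.mem_ker]
      exact hworthN (φ p) (hφN p)
    have hrk : finrank ℝ (LinearMap.ker (Bf d w)) = d + 1 := by
      have hBw : Bf d w ≠ 0 := by
        intro h
        refine hw0 (Bf_nondeg.1 w fun y => ?_)
        rw [h]
        rfl
      have h1 := LinearMap.finrank_range_add_finrank_ker (Bf d w)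
      rw [finrank_euclideanSpace_fin] at h1
      have hle : finrank ℝ (LinearMap.range (Bf d w)) ≤ 1 := by
        have := Submodule.finrank_le (LinearMap.range (Bf d w))
        rwa [Module.finrank_self] at this
      have hpos : finrank ℝ (LinearMap.range (Bf d w)) ≠ 0 := by
        intro h0
        have : LinearMap.range (Bf d w) = ⊥ := Submodule.finrank_eq_zero.mp h0
        exact hBw (LinearMap.range_eq_bot.mp this)
      omega
    obtain ⟨m, L, hbound, -, hm2⟩ := lemA d (LinearMap.ker (Bf d w)) (φ p0) (hφker p0) hx0
    have hm2' := hm2 w hwker hw0 (fun y hy => by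
      rw [LinearMap.mem_ker] at hy
      exact hy)
    rw [hrk] at hm2'
    have hmd : m < d := by omega
    refine key d hd U hUopen ⟨q0, hq0⟩ φ hAdS hsp m hmd L ?_
    intro p p'
    have h := hbound (φ p - φ p')
      (Submodule.sub_mem _ (hφker p) (hφker p'))
    rwa [map_sub] at h
  have hgwP : g w ∈ P := by
    rw [hP, LinearMap.BilinForm.mem_orthogonal_iff]
    intro n hn
    have h1 : bil d (g n) (g w) = bil d n w := hg n w
    rw [hNfix n hn] at h1
    have h2 : bil d n w = 0 := by
      rw [bil_comm]
      exact hworthN n hn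
    show bil d n (g w) = 0
    rw [h1, h2]
  obtain ⟨a, ha⟩ := hPspan (g w) hgwP
  have hsmul2 : ∀ b : ℝ, bil d (b • w) (b • w) = b * b * bil d w w := by
    intro b
    rw [bil_smul_left, bil_comm, bil_smul_left, bil_comm w]
    ring
  have haa : a * a = 1 := by
    have h := hg w w
    rw [ha, hsmul2] at h
    have := mul_right_cancel₀ hqw (by rw [h, one_mul] : a * a * bil d w w = 1 * bil d w w)
    exact this
  have hdisj : ∀ x, x ∈ N → x ∈ P → x = 0 := by
    intro x hxN hxP
    obtain ⟨b, hb⟩ := hPspan x hxP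
    have h0 : bil d x x = 0 := by
      have h1 := (LinearMap.BilinForm.mem_orthogonal_iff.mp hxP) x hxN
      exact h1
    rw [hb, hsmul2] at h0
    have hb0 : b = 0 := by
      rcases mul_eq_zero.mp h0 with h | h
      · rcases mul_eq_zero.mp h with h' | h' <;> exact h'
      · exact absurd h hqw
    rw [hb, hb0, zero_smul]
  rcases mul_self_eq_one_iff.mp haa with ha1 | ha1
  · rw [ha1, one_smul] at ha
    have hwN : w ∈ N := by
      rw [hN, LinearMap.mem_ker, LinearMap.sub_apply, LinearMap.id_apply, ha, sub_self]
    exact hw0 (hdisj w hwN hwP)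
  · rw [ha1, neg_one_smul] at ha
    have hcompl : IsCompl N P := by
      constructor
      · exact Submodule.disjoint_def.mpr hdisj
      · rw [codisjoint_iff]
        apply Submodule.eq_top_of_finrank_eq
        have hsum := Submodule.finrank_sup_add_finrank_inf_eq N P
        have hinf : N ⊓ P = ⊥ := (Submodule.disjoint_def.mpr hdisj).eq_bot
        rw [hinf, finrank_bot, add_zero, hNrank, hPrank] at hsum
        rw [finrank_euclideanSpace_fin]
        omega
    set e := Submodule.prodEquivOfIsCompl N P hcompl with he
    set bN := Module.finBasisOfFinrankEq ℝ N hNrank with hbN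
    set b := (bN.prod bP).map e with hb
    have hbinl : ∀ i, b (Sum.inl i) = ((bN i : N) : EuclideanSpace ℝ (Fin (d + 2))) := by
      intro i
      rw [hb, Basis.map_apply]
      have h1 : (bN.prod bP) (Sum.inl i) = ((bN i : N), (0 : P)) := by
        ext
        · simp [Basis.prod_apply_inl_fst]
        · simp [Basis.prod_apply_inl_snd]
      rw [h1, he, Submodule.coe_prodEquivOfIsCompl']
      simp
    have hbinr : ∀ j : Fin 1, b (Sum.inr j) = w := by
      intro j
      have hj : j = 0 := Subsingleton.elim j 0
      subst hj
      rw [hb, Basis.map_apply]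
      have h1 : (bN.prod bP) (Sum.inr 0) = ((0 : N), bP 0) := by
        ext
        · simp [Basis.prod_apply_inr_fst]
        · simp [Basis.prod_apply_inr_snd]
      rw [h1, he, Submodule.coe_prodEquivOfIsCompl']
      simp [hw]
    have hdet2 : LinearMap.det g = -1 := by
      rw [← LinearMap.det_toMatrix b g]
      have hM : LinearMap.toMatrix b b g
          = Matrix.diagonal (Sum.elim (fun _ => (1 : ℝ)) fun _ => -1) := by
        ext i j
        rw [LinearMap.toMatrix_apply]
        rcases j with j | j
        · have hgb : g (b (Sum.inl j)) = b (Sum.inl j) := by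
            rw [hbinl j]
            exact hNfix _ (bN j).2
          rw [hgb, Basis.repr_self, Finsupp.single_apply]
          by_cases h : i = Sum.inl j
          · subst h
            simp [Matrix.diagonal_apply_eq]
          · rw [Matrix.diagonal_apply_ne _ h, if_neg (fun hh => h hh.symm)]
        · have hgb : g (b (Sum.inr j)) = -(b (Sum.inr j)) := by
            rw [hbinr j, ha]
          rw [hgb, map_neg, Basis.repr_self, Finsupp.neg_apply, Finsupp.single_apply]
          by_cases h : i = Sum.inr j
          · subst h
            simp [Matrix.diagonal_apply_eq]
          · rw [Matrix.diagonal_apply_ne _ h, if_neg (fun hh => h hh.symm)]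
            simp
      rw [hM, Matrix.det_diagonal, Fintype.prod_sum_type]
      simp
    rw [hdet2] at hdet
    norm_num at hdet
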